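/- Under the same hypotheses (distinct $\lambda_j$ and for each $j$ some $s$ with $c_{sj}\neq 0$), the only vector $e\in\mathbb{R}^{2N}$ satisfying $CA^n e = 0$ for all $n = 0,1,\dots,2N-1$ is $e=0$. -/
import Mathlib


def blockA (N : ℕ) (lam : Fin N → ℝ) : Matrix (Fin N × Fin 2) (Fin N × Fin 2) ℝ :=
  Matrix.of fun p q =>
    if p.1 = q.1 then
      if p.2 = 0 ∧ q.2 = 1 then 1
      else if p.2 = 1 ∧ q.2 = 0 then -lam p.1
      else 0
    else 0

def outC (N r : ℕ) (c : Fin (r + 1) → Fin N → ℝ) : Matrix (Fin (r + 1)) (Fin N × Fin 2) ℝ :=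
  Matrix.of fun s q => if q.2 = 0 then c s q.1 else 0

lemma blockA_mulVec (N : ℕ) (lam : Fin N → ℝ) (w : Fin N × Fin 2 → ℝ) (p : Fin N × Fin 2) :
    (blockA N lam).mulVec w p = if p.2 = 0 then w (p.1, 1) else -lam p.1 * w (p.1, 0) := by
  obtain ⟨j0, i0⟩ := p
  fin_cases i0 <;>
    simp [Matrix.mulVec, dotProduct, Fintype.sum_prod_type, Fin.sum_univ_two, blockA,
      Finset.sum_ite_eq, Finset.sum_ite_eq']

lemma blockA_sq_mulVec (N : ℕ) (lam : Fin N → ℝ) (w : Fin N × Fin 2 → ℝ) (p : Fin N × Fin 2) :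
    (blockA N lam).mulVec ((blockA N lam).mulVec w) p = -lam p.1 * w p := by
  obtain ⟨j0, i0⟩ := p
  fin_cases i0 <;> simp [blockA_mulVec]

lemma blockA_pow_even (N : ℕ) (lam : Fin N → ℝ) (k : ℕ) (w : Fin N × Fin 2 → ℝ) :
    ((blockA N lam) ^ (2 * k)).mulVec w = fun p => (-lam p.1) ^ k * w p := by
  induction k generalizing w with
  | zero => funext p; simp
  | succ k ih =>
      have h2 : 2 * (k + 1) = (2 * k + 1) + 1 := by ring
      rw [h2, pow_succ, pow_succ, ← Matrix.mulVec_mulVec, ← Matrix.mulVec_mulVec, ih]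
      funext p
      simp only [blockA_sq_mulVec]
      ring

lemma outC_mulVec (N r : ℕ) (c : Fin (r + 1) → Fin N → ℝ) (u : Fin N × Fin 2 → ℝ)
    (s : Fin (r + 1)) :
    (outC N r c).mulVec u s = ∑ j : Fin N, c s j * u (j, 0) := by
  simp [Matrix.mulVec, dotProduct, Fintype.sum_prod_type, Fin.sum_univ_two, outC]

theorem stmt6 (N r : ℕ) (lam : Fin N → ℝ) (c : Fin (r + 1) → Fin N → ℝ)
    (hdist : Function.Injective lam)
    (hc : ∀ j : Fin N, ∃ s : Fin (r + 1), c s j ≠ 0)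
    (e : Fin N × Fin 2 → ℝ)
    (he : ∀ n : ℕ, n < 2 * N → (outC N r c * (blockA N lam) ^ n).mulVec e = 0) :
    e = 0 := by
  set A := blockA N lam with hA
  set g := A.mulVec e with hg
  have hμinj : Function.Injective (fun j : Fin N => -lam j) := fun a b h => by
    apply hdist; have := neg_injective h; simpa using this
  -- even powers
  have heven : ∀ s : Fin (r + 1), ∀ k : Fin N,
      ∑ j : Fin N, (c s j * e (j, 0)) * (-lam j) ^ (k : ℕ) = 0 := by
    intro s k
    have hk : 2 * (k : ℕ) < 2 * N := by omega
    have := congrFun (he (2 * (k : ℕ)) hk) s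
    rw [← Matrix.mulVec_mulVec, blockA_pow_even, outC_mulVec] at this
    simpa [mul_assoc, mul_comm, mul_left_comm] using this
  have hodd : ∀ s : Fin (r + 1), ∀ k : Fin N,
      ∑ j : Fin N, (c s j * e (j, 1)) * (-lam j) ^ (k : ℕ) = 0 := by
    intro s k
    have hk : 2 * (k : ℕ) + 1 < 2 * N := by omega
    have := congrFun (he (2 * (k : ℕ) + 1) hk) s
    rw [← Matrix.mulVec_mulVec, pow_succ, ← Matrix.mulVec_mulVec, ← hg,
      blockA_pow_even, outC_mulVec] at this
    have hg0 : ∀ j : Fin N, g (j, 0) = e (j, 1) := by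
      intro j; rw [hg, hA, blockA_mulVec]; simp
    simp only [hg0] at this
    simpa [mul_assoc, mul_comm, mul_left_comm] using this
  have key : ∀ (i : Fin 2) (s : Fin (r + 1)) (j : Fin N), c s j * e (j, i) = 0 := by
    intro i s j
    have hv : (fun j : Fin N => c s j * e (j, i)) = 0 := by
      apply Matrix.eq_zero_of_forall_pow_sum_mul_pow_eq_zero hμinj
      intro k
      fin_cases i
      · exact heven s k
      · exact hodd s k
    exact congrFun hv j
  funext p
  obtain ⟨j, i⟩ := p
  obtain ⟨s, hs⟩ := hc j
  have := key i s j
  have : e (j, i) = 0 := by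
    rcases mul_eq_zero.mp this with h | h
    · exact absurd h hs
    · exact h
  simpa using this
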